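/- Let p be a real polynomial of degree n ≥ 2 that is self-interlacing of kind I. Then for every k = 1, …, n−1, the k-th derivative p^{(k)} is also self-interlacing of kind I (as a polynomial of degree n−k). -/

import Mathlib

open Polynomial

/-- A real polynomial `p` is *self-interlacing of kind I* if all of its `natDegree` roots
are real and simple and, listed in order of decreasing absolute value `λ₀, λ₁, …`,
they satisfy `λ₀ > -λ₁ > λ₂ > -λ₃ > ⋯ > 0`. -/
def SelfInterlacingI (p : Polynomial ℝ) : Prop :=
  ∃ lam : Fin p.natDegree → ℝ,
    (p = Polynomial.C p.leadingCoeff *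
        ∏ i : Fin p.natDegree, (Polynomial.X - Polynomial.C (lam i))) ∧
    StrictAnti (fun i : Fin p.natDegree => (-1 : ℝ) ^ (i : ℕ) * lam i) ∧
    ∀ i : Fin p.natDegree, 0 < (-1 : ℝ) ^ (i : ℕ) * lam i


open Polynomial Finset

/-! ### Generic helpers -/

lemma sign_combine {A : ℝ} {e1 e2 : ℕ} (h1 : 0 < A * (-1 : ℝ) ^ e1)
    (h2 : 0 < A * (-1 : ℝ) ^ e2) : Even (e1 + e2) := by
  rcases Nat.even_or_odd e1 with he1 | he1 <;> rcases Nat.even_or_odd e2 with he2 | he2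
  · exact he1.add he2
  · exfalso; rw [he1.neg_one_pow] at h1; rw [he2.neg_one_pow] at h2; nlinarith
  · exfalso; rw [he1.neg_one_pow] at h1; rw [he2.neg_one_pow] at h2; nlinarith
  · exact he1.add_odd he2

lemma sign_transfer {A : ℝ} {e1 e2 : ℕ} (h1 : 0 < A * (-1 : ℝ) ^ e1)
    (he : Even (e1 + e2)) : 0 < A * (-1 : ℝ) ^ e2 := by
  rcases Nat.even_or_odd e1 with he1 | he1
  · have he2 : Even e2 := by
      rw [Nat.even_add] at he; exact he.mp he1
    rw [he1.neg_one_pow] at h1; rw [he2.neg_one_pow]; linarith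
  · have he2 : Odd e2 := by
      rw [Nat.even_add] at he
      rw [Nat.odd_iff, ← Nat.not_even_iff]
      intro h
      exact (Nat.not_even_iff_odd.mpr he1) (he.mpr h)
    rw [he1.neg_one_pow] at h1; rw [he2.neg_one_pow]; linarith

/-- sign of a product over a finset:
if all factors are nonzero, `(-1)^(#negatives) * prod > 0`. -/
lemma sign_prod {ι : Type*} [DecidableEq ι] (s : Finset ι) (f : ι → ℝ) (hf : ∀ i ∈ s, f i ≠ 0) :
    0 < (-1 : ℝ) ^ (s.filter fun i => f i < 0).card * ∏ i ∈ s, f i := by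
  classical
  induction s using Finset.cons_induction with
  | empty => simp
  | cons a s ha ih =>
    have hfa : f a ≠ 0 := hf a (mem_cons_self a s)
    have ih' := ih (fun i hi => hf i (mem_cons.mpr (Or.inr hi)))
    rw [Finset.filter_cons, Finset.prod_cons]
    by_cases h : f a < 0
    · simp only [if_pos h]
      rw [Finset.card_cons, pow_succ]
      nlinarith
    · simp only [if_neg h]
      have hfa' : 0 < f a := lt_of_le_of_ne (not_lt.mp h) (Ne.symm hfa)
      nlinarith

/-- per-element parity lemma -/
lemma tripar {x lam : ℝ} (h1 : lam ≠ x) (h2 : lam ≠ -x) :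
    Odd ((if x < lam then 1 else 0) + (if -x < lam then 1 else 0)
      + (if x ^ 2 < lam ^ 2 then 1 else 0) : ℕ) := by
  have h3 : lam ^ 2 ≠ x ^ 2 := by
    intro h
    rcases sq_eq_sq_iff_eq_or_eq_neg.mp h with h | h
    · exact h1 h
    · exact h2 h
  rcases lt_or_gt_of_ne h3 with hlt | hgt
  · have hx0 : x ≠ 0 := by intro h; rw [h] at hlt; nlinarith
    rcases lt_or_gt_of_ne hx0 with hx | hx
    · have hA : x < lam := by nlinarith
      have hB : ¬(-x < lam) := by intro h; nlinarith
      have hC : ¬(x ^ 2 < lam ^ 2) := by intro h; nlinarith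
      simp only [if_pos hA, if_neg hB, if_neg hC]
      decide
    · have hA : ¬(x < lam) := by intro h; nlinarith
      have hB : -x < lam := by nlinarith
      have hC : ¬(x ^ 2 < lam ^ 2) := by intro h; nlinarith
      simp only [if_neg hA, if_pos hB, if_neg hC]
      decide
  · have hl0 : lam ≠ 0 := by intro h; rw [h] at hgt; nlinarith
    rcases lt_or_gt_of_ne hl0 with hl | hl
    · have hA : ¬(x < lam) := by intro h; nlinarith
      have hB : ¬(-x < lam) := by intro h; nlinarith
      simp only [if_neg hA, if_neg hB, if_pos hgt]
      decide
    · have hA : x < lam := by nlinarith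
      have hB : -x < lam := by nlinarith
      simp only [if_pos hA, if_pos hB, if_pos hgt]
      decide

/-- global parity lemma -/
lemma par_global {n : ℕ} (lam : Fin n → ℝ) (x : ℝ)
    (h : ∀ i, lam i ≠ x ∧ lam i ≠ -x) :
    Even ((univ.filter fun i => x < lam i).card + (univ.filter fun i => -x < lam i).card
      + (univ.filter fun i => x ^ 2 < (lam i) ^ 2).card + n) := by
  classical
  have hsum : (univ.filter fun i => x < lam i).card + (univ.filter fun i => -x < lam i).card
      + (univ.filter fun i => x ^ 2 < (lam i) ^ 2).card + n
      = ∑ i : Fin n, ((if x < lam i then 1 else 0) + (if -x < lam i then 1 else 0)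
        + (if x ^ 2 < (lam i) ^ 2 then 1 else 0) + 1) := by
    rw [Finset.sum_add_distrib, Finset.sum_add_distrib, Finset.sum_add_distrib]
    rw [← Finset.card_filter, ← Finset.card_filter, ← Finset.card_filter]
    simp [Finset.card_univ]
  rw [hsum]
  apply Finset.even_sum
  intro i _
  exact (tripar (h i).1 (h i).2).add_one
open Finset

/-! ### The V-lemma -/

noncomputable def Vf (u : ℝ) {n : ℕ} (a : Fin n → ℝ) : ℝ :=
  ∑ i : Fin n, (-1 : ℝ) ^ (i : ℕ) * (a i / (u - (a i) ^ 2))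

noncomputable def cntAbove (u : ℝ) {n : ℕ} (a : Fin n → ℝ) : ℕ :=
  (univ.filter fun i => u < (a i) ^ 2).card

lemma Vf_succ (u : ℝ) {n : ℕ} (a : Fin (n + 1) → ℝ) :
    Vf u a = a 0 / (u - (a 0) ^ 2) - Vf u (a ∘ Fin.succ) := by
  unfold Vf
  rw [Fin.sum_univ_succ, Fin.val_zero, pow_zero, one_mul]
  have key : ∑ i : Fin n, (-1:ℝ) ^ (i.succ : ℕ) * (a i.succ / (u - a i.succ ^ 2))
      = - ∑ i : Fin n, (-1:ℝ) ^ (i : ℕ) * ((a ∘ Fin.succ) i / (u - ((a ∘ Fin.succ) i) ^ 2)) := by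
    rw [← Finset.sum_neg_distrib]
    apply Finset.sum_congr rfl
    intro i _
    simp only [Fin.val_succ, pow_succ, Function.comp_apply]
    ring
  rw [key]
  ring

lemma cntAbove_succ (u : ℝ) {n : ℕ} (a : Fin (n + 1) → ℝ) :
    cntAbove u a = (if u < (a 0) ^ 2 then 1 else 0) + cntAbove u (a ∘ Fin.succ) := by
  classical
  unfold cntAbove
  rw [Finset.card_filter, Fin.sum_univ_succ, ← Finset.card_filter]
  rfl

lemma hmono {u b a : ℝ} (hu : 0 ≤ u) (hb : 0 < b) (hba : b < a)
    (hside : (u < b ^ 2 ∧ u < a ^ 2) ∨ (b ^ 2 < u ∧ a ^ 2 < u)) :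
    b / (u - b ^ 2) < a / (u - a ^ 2) := by
  rcases hside with ⟨h1, h2⟩ | ⟨h1, h2⟩
  · have d1 : u - b ^ 2 < 0 := by linarith
    have d2 : u - a ^ 2 < 0 := by linarith
    have e1 : u - b ^ 2 ≠ 0 := ne_of_lt d1
    have e2 : u - a ^ 2 ≠ 0 := ne_of_lt d2
    have key : a / (u - a ^ 2) - b / (u - b ^ 2)
        = ((a - b) * (u + a * b)) / ((u - b ^ 2) * (u - a ^ 2)) := by
      field_simp
      ring
    have hnum : 0 < (a - b) * (u + a * b) := by
      apply mul_pos (by linarith)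
      have : 0 < a * b := mul_pos (by linarith) hb
      linarith
    have hden : 0 < (u - b ^ 2) * (u - a ^ 2) := mul_pos_of_neg_of_neg d1 d2
    have : 0 < a / (u - a ^ 2) - b / (u - b ^ 2) := by
      rw [key]; exact div_pos hnum hden
    linarith
  · have d1 : 0 < u - b ^ 2 := by linarith
    have d2 : 0 < u - a ^ 2 := by linarith
    rw [div_lt_div_iff₀ d1 d2]
    nlinarith [mul_pos (sub_pos.mpr hba) (add_pos_of_nonneg_of_pos hu (mul_pos (hb.trans hba) hb))]

/-- The main induction: P and Q claims about `Vf`. -/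
lemma VfPQ (u : ℝ) : ∀ (n : ℕ) (a : Fin n → ℝ), 0 ≤ u → StrictAnti a → (∀ i, 0 < a i) →
    (∀ i, (a i) ^ 2 ≠ u) →
    (Even (cntAbove u a) → 0 ≤ Vf u a) ∧
    (∀ h0 : 0 < n, (cntAbove u a = 0 ∨ Odd (cntAbove u a)) →
      Vf u a ≤ a ⟨0, h0⟩ / (u - (a ⟨0, h0⟩) ^ 2)) := by
  intro n
  induction n with
  | zero =>
    intro a _ _ _ _
    exact ⟨fun _ => by simp [Vf], fun h0 => by omega⟩
  | succ n ih =>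
    intro a hu hanti hpos hne
    have hV := Vf_succ u a
    have hC := cntAbove_succ u a
    set t : Fin n → ℝ := a ∘ Fin.succ with ht
    have htanti : StrictAnti t := fun i j hij => hanti (Fin.succ_lt_succ_iff.mpr hij)
    have htpos : ∀ i, 0 < t i := fun i => hpos _
    have htne : ∀ i, (t i) ^ 2 ≠ u := fun i => hne _
    have iht := ih t hu htanti htpos htne
    have hzero : ∀ h0 : 0 < n + 1, a ⟨0, h0⟩ = a 0 := fun h0 => by congr 1
    have hheadmax : ∀ i : Fin (n+1), a i ≤ a 0 := by
      intro i
      rcases Fin.eq_zero_or_eq_succ i with rfl | ⟨j, rfl⟩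
      · exact le_refl _
      · exact le_of_lt (hanti (Fin.succ_pos j))
    have hallbelow : (a 0) ^ 2 < u → cntAbove u a = 0 := by
      intro h
      unfold cntAbove
      rw [Finset.card_eq_zero, Finset.filter_eq_empty_iff]
      intro i _
      simp only [not_lt]
      have h1 : a i ≤ a 0 := hheadmax i
      nlinarith [hpos i]
    have htailhead : ∀ h0 : 0 < n, 0 < cntAbove u t → u < (t ⟨0, h0⟩) ^ 2 := by
      intro h0 hpos'
      unfold cntAbove at hpos'
      rw [Finset.card_pos] at hpos'
      obtain ⟨j, hj⟩ := hpos'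
      rw [Finset.mem_filter] at hj
      have hle : (⟨0, h0⟩ : Fin n) ≤ j := by simp [Fin.le_def]
      have : t j ≤ t ⟨0, h0⟩ := by
        rcases eq_or_lt_of_le hle with h | h
        · rw [← h]
        · exact le_of_lt (htanti h)
      nlinarith [htpos j, hj.2]
    have hsucclt : ∀ h0 : 0 < n, t ⟨0, h0⟩ < a 0 := by
      intro h0
      exact hanti (Fin.succ_pos _)
    constructor
    · -- P : Even cntAbove → 0 ≤ Vf
      intro heven
      rcases lt_or_gt_of_ne (hne 0) with hbe | hab
      · -- head below : all below
        have hC0 := hallbelow hbe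
        rcases Nat.eq_zero_or_pos n with rfl | hn0
        · rw [hV]
          have h1 : Vf u t = 0 := by simp [Vf]
          rw [h1]
          have : 0 < a 0 / (u - (a 0) ^ 2) := div_pos (hpos 0) (by linarith)
          linarith
        · have hct0 : cntAbove u t = 0 := by
            rw [hC] at hC0
            omega
          have hq := iht.2 hn0 (Or.inl hct0)
          have htb : (t ⟨0, hn0⟩) ^ 2 < u := by
            rcases lt_or_gt_of_ne (htne ⟨0, hn0⟩) with h | h
            · exact h
            · exfalso
              have : 0 < cntAbove u t := by
                unfold cntAbove
                rw [Finset.card_pos]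
                exact ⟨⟨0, hn0⟩, Finset.mem_filter.mpr ⟨Finset.mem_univ _, h⟩⟩
              omega
          have hlt : t ⟨0, hn0⟩ / (u - (t ⟨0, hn0⟩) ^ 2) < a 0 / (u - (a 0) ^ 2) :=
            hmono hu (htpos ⟨0, hn0⟩) (hsucclt hn0) (Or.inr ⟨htb, hbe⟩)
          rw [hV]; linarith
      · -- head above : u < (a 0)^2
        rw [hC, if_pos hab] at heven
        have hodd : Odd (cntAbove u t) := by
          rcases Nat.even_or_odd (cntAbove u t) with h | h
          · exfalso; rcases h with ⟨k, hk⟩; rcases heven with ⟨l, hl⟩; omega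
          · exact h
        have hn0 : 0 < n := by
          by_contra h
          have hn' : n = 0 := by omega
          subst hn'
          have h0' : cntAbove u t = 0 := by simp [cntAbove]
          rw [h0'] at hodd; rcases hodd with ⟨k, hk⟩; omega
        have hq := iht.2 hn0 (Or.inr hodd)
        have hth : u < (t ⟨0, hn0⟩) ^ 2 := htailhead hn0 (by
          rcases hodd with ⟨k, hk⟩; omega)
        have hlt : t ⟨0, hn0⟩ / (u - (t ⟨0, hn0⟩) ^ 2) < a 0 / (u - (a 0) ^ 2) :=
          hmono hu (htpos ⟨0, hn0⟩) (hsucclt hn0) (Or.inl ⟨hth, hab⟩)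
        rw [hV]; linarith
    · -- Q : head bound
      intro h0 hyp
      have hVt : 0 ≤ Vf u t := by
        apply iht.1
        rcases hyp with h | h
        · rw [hC] at h
          have : cntAbove u t = 0 := by omega
          rw [this]; exact ⟨0, rfl⟩
        · rcases lt_or_gt_of_ne (hne 0) with hbe | hab
          · exfalso
            have h' := hallbelow hbe
            rw [h'] at h
            rcases h with ⟨k, hk⟩; omega
          · rw [hC, if_pos hab] at h
            rcases Nat.even_or_odd (cntAbove u t) with he | ho
            · exact he
            · exfalso
              rcases h with ⟨k, hk⟩
              rcases ho with ⟨l, hl⟩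
              omega
      rw [hzero h0, hV]
      linarith

/-- Final form of the V-lemma : sign of `Vf` is `(-1)^cntAbove`. -/
lemma Vf_sign (u : ℝ) {n : ℕ} (a : Fin n → ℝ) (hu : 0 ≤ u) (hanti : StrictAnti a)
    (hpos : ∀ i, 0 < a i) (hne : ∀ i, (a i) ^ 2 ≠ u) (hn : 0 < n) :
    0 < (-1 : ℝ) ^ (cntAbove u a) * Vf u a := by
  obtain ⟨m, rfl⟩ : ∃ m, n = m + 1 := ⟨n - 1, by omega⟩
  have hV := Vf_succ u a
  have hC := cntAbove_succ u a
  set t : Fin m → ℝ := a ∘ Fin.succ with ht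
  have htanti : StrictAnti t := fun i j hij => hanti (Fin.succ_lt_succ_iff.mpr hij)
  have htpos : ∀ i, 0 < t i := fun i => hpos _
  have htne : ∀ i, (t i) ^ 2 ≠ u := fun i => hne _
  have iht := VfPQ u m t hu htanti htpos htne
  have hheadmax : ∀ i : Fin (m+1), a i ≤ a 0 := by
    intro i
    rcases Fin.eq_zero_or_eq_succ i with rfl | ⟨j, rfl⟩
    · exact le_refl _
    · exact le_of_lt (hanti (Fin.succ_pos j))
  have hallbelow : (a 0) ^ 2 < u → cntAbove u a = 0 := by
    intro h
    unfold cntAbove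
    rw [Finset.card_eq_zero, Finset.filter_eq_empty_iff]
    intro i _
    simp only [not_lt]
    have h1 : a i ≤ a 0 := hheadmax i
    nlinarith [hpos i]
  have htailhead : ∀ h0 : 0 < m, 0 < cntAbove u t → u < (t ⟨0, h0⟩) ^ 2 := by
    intro h0 hpos'
    unfold cntAbove at hpos'
    rw [Finset.card_pos] at hpos'
    obtain ⟨j, hj⟩ := hpos'
    rw [Finset.mem_filter] at hj
    have hle : (⟨0, h0⟩ : Fin m) ≤ j := by simp [Fin.le_def]
    have : t j ≤ t ⟨0, h0⟩ := by
      rcases eq_or_lt_of_le hle with h | h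
      · rw [← h]
      · exact le_of_lt (htanti h)
    nlinarith [htpos j, hj.2]
  have hsucclt : ∀ h0 : 0 < m, t ⟨0, h0⟩ < a 0 := by
    intro h0
    exact hanti (Fin.succ_pos _)
  rcases Nat.even_or_odd (cntAbove u a) with heven | hodd
  · rw [heven.neg_one_pow, one_mul]
    rcases lt_or_gt_of_ne (hne 0) with hbe | hab
    · -- head below : all below
      have hC0 := hallbelow hbe
      rcases Nat.eq_zero_or_pos m with rfl | hm0
      · rw [hV]
        have h1 : Vf u t = 0 := by simp [Vf]
        rw [h1]
        have : 0 < a 0 / (u - (a 0) ^ 2) := div_pos (hpos 0) (by linarith)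
        linarith
      · have hct0 : cntAbove u t = 0 := by
          rw [hC] at hC0; omega
        have hq := iht.2 hm0 (Or.inl hct0)
        have htb : (t ⟨0, hm0⟩) ^ 2 < u := by
          rcases lt_or_gt_of_ne (htne ⟨0, hm0⟩) with h | h
          · exact h
          · exfalso
            have : 0 < cntAbove u t := by
              unfold cntAbove
              rw [Finset.card_pos]
              exact ⟨⟨0, hm0⟩, Finset.mem_filter.mpr ⟨Finset.mem_univ _, h⟩⟩
            omega
        have hlt : t ⟨0, hm0⟩ / (u - (t ⟨0, hm0⟩) ^ 2) < a 0 / (u - (a 0) ^ 2) :=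
          hmono hu (htpos ⟨0, hm0⟩) (hsucclt hm0) (Or.inr ⟨htb, hbe⟩)
        rw [hV]; linarith
    · -- head above, tail count odd hence m > 0
      rw [hC, if_pos hab] at heven
      have hodd' : Odd (cntAbove u t) := by
        rcases Nat.even_or_odd (cntAbove u t) with h | h
        · exfalso; rcases h with ⟨k, hk⟩; rcases heven with ⟨l, hl⟩; omega
        · exact h
      have hm0 : 0 < m := by
        by_contra h
        have hm' : m = 0 := by omega
        subst hm'
        have h0' : cntAbove u t = 0 := by simp [cntAbove]
        rw [h0'] at hodd'; rcases hodd' with ⟨k, hk⟩; omega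
      have hq := iht.2 hm0 (Or.inr hodd')
      have hth : u < (t ⟨0, hm0⟩) ^ 2 := htailhead hm0 (by rcases hodd' with ⟨k, hk⟩; omega)
      have hlt : t ⟨0, hm0⟩ / (u - (t ⟨0, hm0⟩) ^ 2) < a 0 / (u - (a 0) ^ 2) :=
        hmono hu (htpos ⟨0, hm0⟩) (hsucclt hm0) (Or.inl ⟨hth, hab⟩)
      rw [hV]; linarith
  · -- odd case : Vf < 0
    rw [hodd.neg_one_pow]
    have hab : u < (a 0) ^ 2 := by
      rcases lt_or_gt_of_ne (hne 0) with h | h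
      · exfalso
        have h' := hallbelow h
        rw [h'] at hodd
        rcases hodd with ⟨k, hk⟩; omega
      · exact h
    have hq := (VfPQ u (m+1) a hu hanti hpos hne).2 (by omega) (Or.inr hodd)
    have hzero : a (⟨0, by omega⟩ : Fin (m+1)) = a 0 := by congr 1
    rw [hzero] at hq
    have hhd : a 0 / (u - (a 0) ^ 2) < 0 :=
      div_neg_of_pos_of_neg (hpos 0) (by linarith)
    nlinarith [hq, hhd]

/-- Finset version of derivative of a product -/
lemma derivative_finset_prod {ι : Type*} [DecidableEq ι] (s : Finset ι) (f : ι → ℝ[X]) :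
    derivative (∏ i ∈ s, f i) =
      ∑ i ∈ s, (∏ j ∈ s.erase i, f j) * derivative (f i) := by
  induction s using Finset.cons_induction with
  | empty => simp
  | cons a s ha ih =>
    rw [Finset.prod_cons, derivative_mul, ih, Finset.sum_cons, Finset.erase_cons, Finset.mul_sum]
    congr 1
    · rw [mul_comm]
    · apply Finset.sum_congr rfl
      intro i hi
      rw [Finset.erase_cons_of_ne ha (fun h => ha (h ▸ hi)), Finset.prod_cons]
      ring

/-- evaluation of a fully factored polynomial -/
lemma eval_factored {n : ℕ} (c : ℝ) (r : Fin n → ℝ) (x : ℝ) :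
    eval x (C c * ∏ i : Fin n, (X - C (r i))) = c * ∏ i : Fin n, (x - r i) := by
  rw [eval_mul, eval_C, eval_prod]
  simp

/-- evaluation of the derivative of a fully factored polynomial -/
lemma eval_deriv_factored {n : ℕ} (c : ℝ) (r : Fin n → ℝ) (x : ℝ) :
    eval x (derivative (C c * ∏ i : Fin n, (X - C (r i))))
      = c * ∑ k : Fin n, ∏ j ∈ univ.erase k, (x - r j) := by
  rw [derivative_C_mul, derivative_finset_prod, eval_mul, eval_C, eval_finset_sum]
  congr 1
  apply Finset.sum_congr rfl
  intro k _
  rw [eval_mul, eval_prod]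
  simp

/-- evaluation of the derivative at a root -/
lemma eval_deriv_at_root {n : ℕ} (c : ℝ) (r : Fin n → ℝ) (k : Fin n) :
    eval (r k) (derivative (C c * ∏ i : Fin n, (X - C (r i))))
      = c * ∏ j ∈ univ.erase k, (r k - r j) := by
  rw [eval_deriv_factored]
  congr 1
  rw [Finset.sum_eq_single k]
  · intro i _ hik
    apply Finset.prod_eq_zero (Finset.mem_erase.mpr ⟨Ne.symm hik, Finset.mem_univ k⟩)
    ring
  · intro h; exact absurd (Finset.mem_univ k) h

/-- permutation invariance of filtered counts -/
lemma card_filter_comp_perm {n : ℕ} (σ : Equiv.Perm (Fin n)) (P : Fin n → Prop)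
    [DecidablePred P] :
    (univ.filter fun i => P (σ i)).card = (univ.filter P).card := by
  apply Finset.card_bij (fun a _ => σ a)
  · intro a ha
    rw [Finset.mem_filter] at ha ⊢
    exact ⟨Finset.mem_univ _, ha.2⟩
  · intro a ha b hb hab
    exact σ.injective hab
  · intro b hb
    rw [Finset.mem_filter] at hb
    exact ⟨σ.symm b, Finset.mem_filter.mpr ⟨Finset.mem_univ _, by simpa using hb.2⟩, by simp⟩

/-! ### Main development -/

open Polynomial Finset



lemma fin_strictAnti {m : ℕ} (f : Fin m → ℝ)
    (h : ∀ i j : Fin m, i.val + 1 = j.val → f j < f i) : StrictAnti f := by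
  have key : ∀ dd : ℕ, ∀ i j : Fin m, i.val + 1 + dd = j.val → f j < f i := by
    intro dd
    induction dd with
    | zero => intro i j hij; exact h i j (by omega)
    | succ dd ih =>
      intro i j hij
      have hmid : i.val + 1 + dd < m := by have := j.isLt; omega
      have h1 : f j < f ⟨i.val + 1 + dd, hmid⟩ := h _ j (by simp only [Fin.val_mk]; omega)
      have h2 : f ⟨i.val + 1 + dd, hmid⟩ < f i := ih i _ (by simp only [Fin.val_mk])
      linarith
  intro i j hij
  rw [Fin.lt_def] at hij
  exact key (j.val - i.val - 1) i j (by omega)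

lemma fin_fun_congr {α : Type*} {m : ℕ} (f : Fin m → α) {a c : ℕ} (h1 : a < m) (h2 : c < m)
    (h : a = c) : f ⟨a, h1⟩ = f ⟨c, h2⟩ := by subst h; rfl

set_option maxHeartbeats 2000000 in
theorem oneStep (m : ℕ) (hm : 1 ≤ m) (q : ℝ[X]) (hdeg : q.natDegree = m + 1)
    (hsi : SelfInterlacingI q) :
    (derivative q).natDegree = m ∧ SelfInterlacingI (derivative q) := by
  classical
  obtain ⟨lam0, hfac0, hanti0, hpos0⟩ := hsi
  set lc := q.leadingCoeff with hlcdef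
  set lam : Fin (m + 1) → ℝ := lam0 ∘ (Fin.cast hdeg.symm) with hlamdef
  have hfac : q = C lc * ∏ i : Fin (m + 1), (X - C (lam i)) := by
    rw [hfac0]
    congr 1
    exact (Equiv.prod_comp (finCongr hdeg.symm) (fun i => X - C (lam0 i))).symm
  have hanti : StrictAnti (fun i : Fin (m + 1) => (-1 : ℝ) ^ (i : ℕ) * lam i) := by
    intro i j hij
    exact hanti0 (show Fin.cast hdeg.symm i < Fin.cast hdeg.symm j from hij)
  have hpos : ∀ i : Fin (m + 1), 0 < (-1 : ℝ) ^ (i : ℕ) * lam i :=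
    fun i => hpos0 (Fin.cast hdeg.symm i)
  clear hfac0 hanti0 hpos0
  have hq0 : q ≠ 0 := fun h => by simp [h] at hdeg
  have hlc : lc ≠ 0 := leadingCoeff_ne_zero.mpr hq0
  set b : Fin (m + 1) → ℝ := fun i => (-1 : ℝ) ^ (i : ℕ) * lam i with hbdef
  have hbanti : StrictAnti b := hanti
  have hbpos : ∀ i, 0 < b i := hpos
  have hsq : ∀ i, (lam i) ^ 2 = (b i) ^ 2 := by
    intro i
    simp only [hbdef]
    rcases Nat.even_or_odd (i : ℕ) with h | h
    · rw [h.neg_one_pow]; ring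
    · rw [h.neg_one_pow]; ring
  have hsqne : ∀ i j : Fin (m + 1), i ≠ j → (lam i) ^ 2 ≠ (lam j) ^ 2 := by
    intro i j hij
    rcases lt_or_gt_of_ne hij with h | h
    · have h0 := hbanti h; have h1 := hbpos i; have h2 := hbpos j
      rw [hsq i, hsq j]; nlinarith
    · have h0 := hbanti h; have h1 := hbpos i; have h2 := hbpos j
      rw [hsq i, hsq j]; nlinarith
  have hlamne : ∀ i j : Fin (m + 1), i ≠ j → lam i ≠ lam j := by
    intro i j hij h
    exact hsqne i j hij (by rw [h])
  have hlaminj : Function.Injective lam := by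
    intro i j h
    by_contra hij
    exact hlamne i j hij h
  have hroot : ∀ t, eval (lam t) q = 0 := by
    intro t
    rw [hfac, eval_mul, eval_C, eval_prod]
    rw [Finset.prod_eq_zero (Finset.mem_univ t) (by simp)]
    ring
  -- line order
  set σ : Equiv.Perm (Fin (m + 1)) := Tuple.sort lam with hσdef
  set d : Fin (m + 1) → ℝ := lam ∘ σ with hddef
  have hdmono : StrictMono d :=
    (Tuple.monotone_sort lam).strictMono_of_injective (hlaminj.comp σ.injective)
  -- Rolle
  have key : ∀ i : Fin m, ∃ x, x ∈ Set.Ioo (d i.castSucc) (d i.succ)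
      ∧ eval x (derivative q) = 0 := by
    intro i
    have hlt : d i.castSucc < d i.succ := hdmono Fin.castSucc_lt_succ
    have heq : (fun x => eval x q) (d i.castSucc) = (fun x => eval x q) (d i.succ) := by
      rw [hddef]
      simp only [Function.comp_apply]
      rw [hroot, hroot]
    obtain ⟨x, hx1, hx2⟩ := exists_deriv_eq_zero hlt q.continuousOn heq
    exact ⟨x, hx1, by rwa [Polynomial.deriv] at hx2⟩
  choose ν hmem hzero using key
  have hνmono : StrictMono ν := by
    intro i j hij
    have h1 : ν i < d i.succ := (hmem i).2
    have h2 : d j.castSucc < ν j := (hmem j).1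
    have h3 : d i.succ ≤ d j.castSucc := by
      apply hdmono.monotone
      rw [Fin.le_def]
      simp only [Fin.val_succ, Fin.coe_castSucc]
      rw [Fin.lt_def] at hij
      omega
    linarith
  have hνinj : Function.Injective ν := hνmono.injective
  -- degree of q'
  set q' := derivative q with hq'def
  have hcoeffq' : q'.coeff m = ((m : ℝ) + 1) * lc := by
    rw [hq'def, coeff_derivative, hlcdef, ← hdeg, coeff_natDegree]
    push_cast
    ring
  have hcne : q'.coeff m ≠ 0 := by
    rw [hcoeffq']
    exact mul_ne_zero (by positivity) hlc
  have hdeg' : q'.natDegree = m := by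
    have hle : q'.natDegree ≤ q.natDegree - 1 := natDegree_derivative_le q
    rw [hdeg] at hle
    have hge : m ≤ q'.natDegree := le_natDegree_of_ne_zero hcne
    omega
  have hq'0 : q' ≠ 0 := fun h => hcne (by rw [h]; simp)
  have hlc' : q'.leadingCoeff = ((m : ℝ) + 1) * lc := by
    rw [leadingCoeff, hdeg', hcoeffq']
  -- roots of q'
  have hrootseq : q'.roots = Multiset.map ν univ.val := by
    have hnd : (Multiset.map ν univ.val).Nodup :=
      Multiset.Nodup.map hνinj univ.nodup
    have hle : Multiset.map ν univ.val ≤ q'.roots := by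
      rw [Multiset.le_iff_subset hnd]
      intro x hx
      obtain ⟨i, _, rfl⟩ := Multiset.mem_map.mp hx
      rw [mem_roots hq'0]
      exact hzero i
    have hcard : Multiset.card q'.roots ≤ Multiset.card (Multiset.map ν univ.val) := by
      rw [Multiset.card_map]
      have h1 := q'.card_roots'
      rw [hdeg'] at h1
      simpa using h1
    exact (Multiset.eq_of_le_of_card_le hle hcard).symm
  have hfac' : q' = C q'.leadingCoeff * ∏ i : Fin m, (X - C (ν i)) := by
    have hcards : Multiset.card q'.roots = q'.natDegree := by
      rw [hrootseq, Multiset.card_map, hdeg']; simp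
    conv_lhs => rw [← C_leadingCoeff_mul_prod_multiset_X_sub_C hcards]
    congr 1
    rw [hrootseq, Multiset.map_map, Finset.prod_eq_multiset_prod]
    rfl
  -- no lam equals a critical point
  have hnotroot : ∀ (i : Fin m) (k : Fin (m + 1)), lam k ≠ ν i := by
    intro i k h
    have h1 : lam k = d (σ.symm k) := by simp [hddef]
    rcases lt_or_ge (σ.symm k) i.succ with hc | hc
    · have hle2 : σ.symm k ≤ i.castSucc := by
        rw [Fin.le_def]; rw [Fin.lt_def] at hc
        simp only [Fin.coe_castSucc]
        simp only [Fin.val_succ] at hc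
        omega
      have h2 : d (σ.symm k) ≤ d i.castSucc := hdmono.monotone hle2
      have h3 := (hmem i).1
      rw [← h1, h] at h2
      linarith
    · have h2 : d i.succ ≤ d (σ.symm k) := hdmono.monotone hc
      have h3 := (hmem i).2
      rw [← h1, h] at h2
      linarith
  -- counting lambdas above each critical point
  have hcLν : ∀ i : Fin m,
      (univ.filter fun k : Fin (m + 1) => ν i < lam k).card = m - i.val := by
    intro i
    rw [← card_filter_comp_perm σ (fun k => ν i < lam k)]
    have hset : (univ.filter fun t : Fin (m + 1) => ν i < lam (σ t)) = Finset.Ici i.succ := by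
      ext t
      simp only [Finset.mem_filter, Finset.mem_univ, true_and, Finset.mem_Ici]
      constructor
      · intro h
        by_contra hc
        push_neg at hc
        have hle2 : t ≤ i.castSucc := by
          rw [Fin.le_def]; rw [Fin.lt_def] at hc
          simp only [Fin.coe_castSucc]
          simp only [Fin.val_succ] at hc
          omega
        have h2 : d t ≤ d i.castSucc := hdmono.monotone hle2
        have h3 := (hmem i).1
        have h4 : d t = lam (σ t) := rfl
        rw [h4] at h2
        linarith
      · intro h
        have h2 : d i.succ ≤ d t := hdmono.monotone h
        have h3 := (hmem i).2
        have h4 : d t = lam (σ t) := rfl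
        rw [h4] at h2
        linarith
    rw [hset, Fin.card_Ici]
    simp only [Fin.val_succ]
    omega
  -- THE MAIN SIGN FACT
  have FACT : ∀ i : Fin m, 0 < lc * eval (-(ν i)) q' *
      (-1 : ℝ) ^ (m + 1 + (univ.filter fun k : Fin (m + 1) => ν i < lam k).card) := by
    intro i
    by_cases hcase : eval (-(ν i)) q = 0
    · -- special case : -(ν i) is a root of q
      have hexk : ∃ k0 : Fin (m + 1), lam k0 = -(ν i) := by
        rw [hfac, eval_mul, eval_C] at hcase
        rcases mul_eq_zero.mp hcase with h | h
        · exact absurd h hlc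
        · rw [eval_prod] at h
          obtain ⟨k0, -, hk⟩ := Finset.prod_eq_zero_iff.mp h
          refine ⟨k0, ?_⟩
          simp only [eval_sub, eval_X, eval_C] at hk
          linarith
      obtain ⟨k0, hk0⟩ := hexk
      have heval' : eval (-(ν i)) q' = lc * ∏ j ∈ univ.erase k0, (lam k0 - lam j) := by
        rw [← hk0, hq'def]
        conv_lhs => rw [hfac]
        rw [eval_deriv_at_root]
      have hprne : ∀ j ∈ univ.erase k0, lam k0 - lam j ≠ 0 := by
        intro j hj h
        have hne := (Finset.mem_erase.mp hj).1
        exact hlamne k0 j (Ne.symm hne) (by linarith)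
      have hsp := sign_prod (univ.erase k0) (fun j => lam k0 - lam j) hprne
      have hfeq : ((univ.erase k0).filter fun j => lam k0 - lam j < 0)
          = univ.filter fun j : Fin (m + 1) => lam k0 < lam j := by
        ext j
        simp only [Finset.mem_filter, Finset.mem_erase, Finset.mem_univ, true_and, and_true]
        constructor
        · rintro ⟨h1, h2⟩
          linarith
        · intro h
          exact ⟨fun hji => by rw [hji] at h; linarith, by linarith⟩
      rw [hfeq] at hsp
      have hA1 : 0 < lc * eval (-(ν i)) q' *
          (-1:ℝ) ^ ((univ.filter fun j : Fin (m + 1) => lam k0 < lam j).card) := by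
        rw [heval']
        nlinarith [mul_pos (mul_self_pos.mpr hlc) hsp]
      apply sign_transfer hA1
      -- parity bookkeeping
      have hx : ν i = -(lam k0) := by linarith
      have hfeq2 : (univ.filter fun k : Fin (m + 1) => ν i < lam k)
          = univ.filter fun k => -(lam k0) < lam k := by
        apply Finset.filter_congr
        intro k _
        rw [hx]
      have htri : ∀ j ∈ univ.erase k0, Odd ((if lam k0 < lam j then 1 else 0)
          + (if -(lam k0) < lam j then 1 else 0)
          + (if (lam k0) ^ 2 < (lam j) ^ 2 then 1 else 0) : ℕ) := by
        intro j hj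
        have hne := (Finset.mem_erase.mp hj).1
        apply tripar (hlamne j k0 hne)
        intro h
        exact hsqne j k0 hne (by rw [h]; ring)
      have hEe : Even (∑ j ∈ univ.erase k0, ((if lam k0 < lam j then 1 else 0)
          + (if -(lam k0) < lam j then 1 else 0)
          + (if (lam k0) ^ 2 < (lam j) ^ 2 then 1 else 0) + 1)) := by
        apply Finset.even_sum
        intro j hj
        exact (htri j hj).add_one
      have hsum4 : ∑ j ∈ univ.erase k0, ((if lam k0 < lam j then 1 else 0)
          + (if -(lam k0) < lam j then 1 else 0)
          + (if (lam k0) ^ 2 < (lam j) ^ 2 then 1 else 0) + 1)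
          = (∑ j ∈ univ.erase k0, if lam k0 < lam j then 1 else 0)
          + (∑ j ∈ univ.erase k0, if -(lam k0) < lam j then 1 else 0)
          + (∑ j ∈ univ.erase k0, if (lam k0) ^ 2 < (lam j) ^ 2 then 1 else 0) + m := by
        rw [Finset.sum_add_distrib, Finset.sum_add_distrib, Finset.sum_add_distrib,
          Finset.sum_const, smul_eq_mul, mul_one,
          Finset.card_erase_of_mem (Finset.mem_univ k0)]
        simp
      have hsplit1 : (univ.filter fun j : Fin (m + 1) => lam k0 < lam j).card
          = (∑ j ∈ univ.erase k0, if lam k0 < lam j then 1 else 0) := by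
        rw [Finset.card_filter, ← Finset.add_sum_erase _ _ (Finset.mem_univ k0)]
        rw [if_neg (lt_irrefl _), zero_add]
      have hsplit2 : (univ.filter fun j : Fin (m + 1) => -(lam k0) < lam j).card
          = (if 0 < lam k0 then 1 else 0)
            + (∑ j ∈ univ.erase k0, if -(lam k0) < lam j then 1 else 0) := by
        rw [Finset.card_filter, ← Finset.add_sum_erase _ _ (Finset.mem_univ k0)]
        congr 1
        by_cases h : 0 < lam k0
        · rw [if_pos (by linarith), if_pos h]
        · rw [if_neg (fun hh => h (by linarith)), if_neg h]
      have hsplit3 : (univ.filter fun j : Fin (m + 1) => (lam k0) ^ 2 < (lam j) ^ 2).card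
          = (∑ j ∈ univ.erase k0, if (lam k0) ^ 2 < (lam j) ^ 2 then 1 else 0) := by
        rw [Finset.card_filter, ← Finset.add_sum_erase _ _ (Finset.mem_univ k0)]
        rw [if_neg (lt_irrefl _), zero_add]
      have hCc : (univ.filter fun j : Fin (m + 1) => (lam k0) ^ 2 < (lam j) ^ 2).card
          = k0.val := by
        have hset2 : (univ.filter fun j : Fin (m + 1) => (lam k0) ^ 2 < (lam j) ^ 2)
            = Finset.Iio k0 := by
          ext j
          simp only [Finset.mem_filter, Finset.mem_univ, true_and, Finset.mem_Iio]
          constructor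
          · intro h
            by_contra hc
            push_neg at hc
            have h5 : b j ≤ b k0 := by
              rcases eq_or_lt_of_le hc with h6 | h6
              · rw [h6]
              · exact le_of_lt (hbanti h6)
            rw [hsq k0, hsq j] at h
            nlinarith [hbpos j, hbpos k0]
          · intro h
            have h5 := hbanti h
            rw [hsq k0, hsq j]
            nlinarith [hbpos j, hbpos k0]
        rw [hset2, Fin.card_Iio]
      have hsgn : (if 0 < lam k0 then (1:ℕ) else 0) + (k0.val % 2) = 1 := by
        rcases Nat.even_or_odd k0.val with he | ho
        · have hp : 0 < lam k0 := by
            have := hpos k0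
            rw [he.neg_one_pow] at this
            linarith
          rw [if_pos hp, Nat.even_iff.mp he]
        · have hp : lam k0 < 0 := by
            have := hpos k0
            rw [ho.neg_one_pow] at this
            linarith
          rw [if_neg (by intro hh; linarith), Nat.odd_iff.mp ho]
      -- final omega assembly
      rw [hfeq2]
      rw [Nat.even_iff] at hEe ⊢
      rw [hsum4] at hEe
      rw [hsplit2]
      have e3 := hsplit3
      have e5 := hCc
      rw [e3] at e5
      rw [hsplit1]
      omega
    · -- general case : -(ν i) is not a root of q
      have hQne : ∀ k, -(ν i) - lam k ≠ 0 := by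
        intro k h
        apply hcase
        rw [hfac, eval_mul, eval_C, eval_prod]
        rw [Finset.prod_eq_zero (Finset.mem_univ k)
          (by simp only [eval_sub, eval_X, eval_C]; linarith)]
        ring
      have hPne : ∀ k, ν i - lam k ≠ 0 := by
        intro k h
        exact hnotroot i k (by linarith)
      have hb2 : ∀ k, (ν i) ^ 2 - (lam k) ^ 2 ≠ 0 := by
        intro k h
        rcases sq_eq_sq_iff_eq_or_eq_neg.mp (by linarith : (lam k) ^ 2 = (ν i) ^ 2) with h' | h'
        · exact hnotroot i k h'
        · exact hQne k (by rw [h']; ring)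
      have hsumzero : ∑ k : Fin (m + 1), (ν i - lam k)⁻¹ = 0 := by
        have h0 : eval (ν i) q' = 0 := hzero i
        rw [hq'def] at h0
        rw [hfac] at h0
        rw [eval_deriv_factored] at h0
        have h1 : ∑ k : Fin (m + 1), ∏ j ∈ univ.erase k, (ν i - lam j) = 0 := by
          rcases mul_eq_zero.mp h0 with h | h
          · exact absurd h hlc
          · exact h
        have h2 : ∀ k : Fin (m + 1), ∏ j ∈ univ.erase k, (ν i - lam j)
            = (∏ j : Fin (m + 1), (ν i - lam j)) * (ν i - lam k)⁻¹ := by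
          intro k
          rw [← Finset.mul_prod_erase univ _ (Finset.mem_univ k)]
          rw [mul_comm (ν i - lam k), mul_assoc, mul_inv_cancel₀ (hPne k), mul_one]
        rw [Finset.sum_congr rfl (fun k _ => h2 k), ← Finset.mul_sum] at h1
        rcases mul_eq_zero.mp h1 with h | h
        · exact absurd h (Finset.prod_ne_zero_iff.mpr (fun j _ => hPne j))
        · exact h
      have hevalq' : eval (-(ν i)) q' = 2 * eval (-(ν i)) q * Vf ((ν i) ^ 2) b := by
        rw [hq'def]
        conv_lhs => rw [hfac]
        conv_rhs => rw [hfac]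
        rw [eval_deriv_factored, eval_factored]
        have h2 : ∀ k : Fin (m + 1), ∏ j ∈ univ.erase k, (-(ν i) - lam j)
            = (∏ j : Fin (m + 1), (-(ν i) - lam j)) * (-(ν i) - lam k)⁻¹ := by
          intro k
          rw [← Finset.mul_prod_erase univ _ (Finset.mem_univ k)]
          rw [mul_comm (-(ν i) - lam k), mul_assoc, mul_inv_cancel₀ (hQne k), mul_one]
        rw [Finset.sum_congr rfl (fun k _ => h2 k), ← Finset.mul_sum]
        have h3 : ∑ k : Fin (m + 1), (-(ν i) - lam k)⁻¹ = 2 * Vf ((ν i) ^ 2) b := by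
          have h4 : ∑ k : Fin (m + 1), (-(ν i) - lam k)⁻¹
              = ∑ k : Fin (m + 1), ((-(ν i) - lam k)⁻¹ + (ν i - lam k)⁻¹) := by
            rw [Finset.sum_add_distrib, hsumzero, add_zero]
          rw [h4]
          unfold Vf
          rw [Finset.mul_sum]
          apply Finset.sum_congr rfl
          intro k _
          have hb1 : ((-1:ℝ) ^ (k : ℕ)) * b k = lam k := by
            rw [hbdef]
            simp only
            rw [← mul_assoc, ← pow_add, Even.neg_one_pow ⟨(k : ℕ), by ring⟩, one_mul]
          have hrw : (2:ℝ) * ((-1:ℝ) ^ (k : ℕ) * (b k / ((ν i) ^ 2 - (b k) ^ 2)))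
              = 2 * (lam k / ((ν i) ^ 2 - (lam k) ^ 2)) := by
            rw [← hsq k, ← hb1]
            ring
          rw [hrw]
          field_simp [hQne k, hPne k, hb2 k]
          ring
        rw [h3]
        ring
      have hA1 : 0 < lc * eval (-(ν i)) q *
          (-1:ℝ) ^ ((univ.filter fun k : Fin (m + 1) => -(ν i) < lam k).card) := by
        have hsp := sign_prod univ (fun k : Fin (m + 1) => -(ν i) - lam k) (fun k _ => hQne k)
        have hfeq : (univ.filter fun k : Fin (m + 1) => -(ν i) - lam k < 0)
            = univ.filter fun k => -(ν i) < lam k := by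
          apply Finset.filter_congr
          intro k _
          constructor
          · intro h; linarith
          · intro h; linarith
        rw [hfeq] at hsp
        rw [hfac, eval_factored]
        nlinarith [mul_pos (mul_self_pos.mpr hlc) hsp]
      have hA2 : 0 < (-1:ℝ) ^ (cntAbove ((ν i) ^ 2) b) * Vf ((ν i) ^ 2) b := by
        apply Vf_sign _ b (sq_nonneg _) hbanti hbpos _ (by omega)
        intro k h
        rw [← hsq k] at h
        exact hb2 k (by linarith)
      have hcomb : 0 < lc * eval (-(ν i)) q' *
          (-1:ℝ) ^ ((univ.filter fun k : Fin (m + 1) => -(ν i) < lam k).card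
            + cntAbove ((ν i) ^ 2) b) := by
        rw [hevalq', pow_add]
        nlinarith [mul_pos hA1 hA2]
      apply sign_transfer hcomb
      have hglob := par_global lam (ν i)
        (fun k => ⟨fun h => hnotroot i k h, fun h => hQne k (by rw [h]; ring)⟩)
      have hAbs : (univ.filter fun k : Fin (m + 1) => (ν i) ^ 2 < (lam k) ^ 2).card
          = cntAbove ((ν i) ^ 2) b := by
        unfold cntAbove
        congr 1
        apply Finset.filter_congr
        intro k _
        rw [hsq k]
      rw [hAbs] at hglob
      rw [Nat.even_iff] at hglob ⊢
      omega
  -- derived nondegeneracies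
  have hq'ne : ∀ i : Fin m, eval (-(ν i)) q' ≠ 0 := by
    intro i h
    have h2 := FACT i
    rw [h] at h2
    simp at h2
  have hννne : ∀ i j : Fin m, ν j ≠ -(ν i) := by
    intro i j h
    apply hq'ne i
    rw [← h]
    exact hzero j
  have hlcq'pos : 0 < lc * q'.leadingCoeff := by
    rw [hlc']
    have h2 : (0:ℝ) < (m : ℝ) + 1 := by positivity
    nlinarith [mul_self_pos.mpr hlc]
  have hAfact : ∀ i : Fin m, 0 < lc * eval (-(ν i)) q' *
      (-1:ℝ) ^ ((univ.filter fun j : Fin m => -(ν i) < ν j).card) := by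
    intro i
    have hne : ∀ j ∈ (univ : Finset (Fin m)), -(ν i) - ν j ≠ 0 := by
      intro j _ h
      exact hννne i j (by linarith)
    have hsp := sign_prod univ _ hne
    have hfeq : (univ.filter fun j : Fin m => -(ν i) - ν j < 0)
        = univ.filter fun j => -(ν i) < ν j := by
      apply Finset.filter_congr
      intro k _
      constructor
      · intro h; linarith
      · intro h; linarith
    rw [hfeq] at hsp
    have heval : eval (-(ν i)) q' = q'.leadingCoeff * ∏ j : Fin m, (-(ν i) - ν j) := by
      conv_lhs => rw [hfac']
      rw [eval_factored]
    rw [heval]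
    nlinarith [mul_pos hlcq'pos hsp]
  have hRparE : ∀ i : Fin m,
      Even ((univ.filter fun j : Fin m => -(ν i) < ν j).card + (i.val + 1)) := by
    intro i
    have h1 := FACT i
    have h2 := hAfact i
    have hcomb := sign_combine h1 h2
    have h3 := hcLν i
    have h4 := i.isLt
    rw [Nat.even_iff] at hcomb ⊢
    omega
  -- pinning R via a total ℕ-valued counting function
  set N : ℕ → ℕ := fun t => if h : t < m then
      (univ.filter fun k : Fin m => -(ν ⟨t, h⟩) < ν k).card else 0 with hNdef
  have hNpar : ∀ t, ∀ h : t < m, Even (N t + (t + 1)) := by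
    intro t h
    have h2 := hRparE ⟨t, h⟩
    rw [hNdef]
    simp only
    rw [dif_pos h]
    exact h2
  have hNle : ∀ t, N t ≤ m := by
    intro t
    rw [hNdef]
    simp only
    by_cases h : t < m
    · rw [dif_pos h]
      have := Finset.card_filter_le (univ : Finset (Fin m)) (fun k => -(ν ⟨t, h⟩) < ν k)
      simpa using this
    · rw [dif_neg h]
      omega
  have hNstep : ∀ t, t + 1 < m → N t + 1 ≤ N (t + 1) := by
    intro t h
    have hmono : (univ.filter fun k : Fin m => -(ν ⟨t, by omega⟩) < ν k).card
        ≤ (univ.filter fun k : Fin m => -(ν ⟨t + 1, h⟩) < ν k).card := by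
      apply Finset.card_le_card
      intro k hk
      rw [Finset.mem_filter] at hk ⊢
      refine ⟨hk.1, ?_⟩
      have h5 : ν (⟨t, by omega⟩ : Fin m) ≤ ν ⟨t + 1, h⟩ :=
        hνmono.monotone (by exact Nat.le_succ t)
      linarith [hk.2]
    have h2 := hNpar t (by omega)
    have h3 := hNpar (t + 1) h
    rw [hNdef] at *
    simp only at *
    rw [dif_pos (by omega : t < m)] at *
    rw [dif_pos h] at *
    rw [Nat.even_iff] at h2 h3
    omega
  have hNlow : ∀ t, t < m → t + 1 ≤ N t := by
    intro t
    induction t with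
    | zero =>
      intro h
      have h2 := hNpar 0 h
      rw [Nat.even_iff] at h2
      omega
    | succ t ih =>
      intro h
      have h1 := ih (by omega)
      have h2 := hNstep t h
      omega
  have hNchain : ∀ dd t, t + dd < m → N t + dd ≤ N (t + dd) := by
    intro dd
    induction dd with
    | zero => intro t h; exact Nat.le_of_eq rfl
    | succ dd ih =>
      intro t h
      have h1 := ih t (by omega)
      have h2 := hNstep (t + dd) (by omega)
      show N t + (dd + 1) ≤ N (t + dd + 1)
      omega
  have hNhigh : ∀ t, t < m → N t ≤ t + 1 := by
    intro t h
    have h1 := hNchain (m - 1 - t) t (by omega)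
    have h2 := hNle (t + (m - 1 - t))
    omega
  have hReq : ∀ i : Fin m, (univ.filter fun k : Fin m => -(ν i) < ν k).card = i.val + 1 := by
    intro i
    have h2 : N i.val = i.val + 1 := le_antisymm (hNhigh i.val i.isLt) (hNlow i.val i.isLt)
    rw [hNdef] at h2
    simp only at h2
    rw [dif_pos i.isLt] at h2
    exact h2
  -- consequences: the interlacing chain
  have hAcons : ∀ t : ℕ, ∀ h1 : t < m, ∀ h2 : m - 1 - t < m,
      -(ν ⟨t, h1⟩) < ν ⟨m - 1 - t, h2⟩ := by
    intro t h1 h2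
    by_contra hc
    push_neg at hc
    have hne : ν ⟨m - 1 - t, h2⟩ ≠ -(ν ⟨t, h1⟩) := hννne _ _
    have hlt : ν ⟨m - 1 - t, h2⟩ < -(ν ⟨t, h1⟩) := lt_of_le_of_ne hc hne
    have hsub : (univ.filter fun j : Fin m => -(ν ⟨t, h1⟩) < ν j)
        ⊆ Finset.Ioi ⟨m - 1 - t, h2⟩ := by
      intro k hk
      rw [Finset.mem_filter] at hk
      rw [Finset.mem_Ioi]
      by_contra hc2
      push_neg at hc2
      have h5 : ν k ≤ ν ⟨m - 1 - t, h2⟩ := hνmono.monotone hc2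
      linarith [hk.2]
    have hcard := Finset.card_le_card hsub
    rw [Fin.card_Ioi] at hcard
    have h6 := hReq ⟨t, h1⟩
    rw [h6] at hcard
    simp only [Fin.val_mk] at hcard
    omega
  have hBcons : ∀ t : ℕ, ∀ h1 : t < m, t + 2 ≤ m → ∀ h2 : m - 2 - t < m,
      ν ⟨m - 2 - t, h2⟩ < -(ν ⟨t, h1⟩) := by
    intro t h1 ht2 h2
    by_contra hc
    push_neg at hc
    have hne : -(ν ⟨t, h1⟩) ≠ ν ⟨m - 2 - t, h2⟩ := fun hh => hννne _ _ hh.symm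
    have hlt : -(ν ⟨t, h1⟩) < ν ⟨m - 2 - t, h2⟩ := lt_of_le_of_ne hc hne
    have hsub : Finset.Ici (⟨m - 2 - t, h2⟩ : Fin m)
        ⊆ (univ.filter fun j : Fin m => -(ν ⟨t, h1⟩) < ν j) := by
      intro k hk
      rw [Finset.mem_Ici] at hk
      rw [Finset.mem_filter]
      exact ⟨Finset.mem_univ _, lt_of_lt_of_le hlt (hνmono.monotone hk)⟩
    have hcard := Finset.card_le_card hsub
    rw [Fin.card_Ici] at hcard
    have h6 := hReq ⟨t, h1⟩
    rw [h6] at hcard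
    simp only [Fin.val_mk] at hcard
    omega
  -- final enumeration
  have hidx1 : ∀ i : Fin m, m - 1 - i.val / 2 < m := by intro i; have := i.isLt; omega
  have hidx2 : ∀ i : Fin m, (i.val - 1) / 2 < m := by intro i; have := i.isLt; omega
  set π : Fin m → Fin m := fun i =>
    if Even i.val then ⟨m - 1 - i.val / 2, hidx1 i⟩ else ⟨(i.val - 1) / 2, hidx2 i⟩ with hπdef
  have hπinj : Function.Injective π := by
    intro i j h
    rw [hπdef] at h
    simp only at h
    have hiv := i.isLt; have hjv := j.isLt
    rcases Nat.even_or_odd i.val with hi | hi <;> rcases Nat.even_or_odd j.val with hj | hj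
    · rw [if_pos hi, if_pos hj, Fin.mk.injEq] at h
      obtain ⟨s, hs⟩ := hi; obtain ⟨t, ht⟩ := hj
      exact Fin.ext (by omega)
    · rw [if_pos hi, if_neg (Nat.not_even_iff_odd.mpr hj), Fin.mk.injEq] at h
      obtain ⟨s, hs⟩ := hi; obtain ⟨t, ht⟩ := hj
      exact absurd h (by omega)
    · rw [if_neg (Nat.not_even_iff_odd.mpr hi), if_pos hj, Fin.mk.injEq] at h
      obtain ⟨s, hs⟩ := hi; obtain ⟨t, ht⟩ := hj
      exact absurd h (by omega)
    · rw [if_neg (Nat.not_even_iff_odd.mpr hi), if_neg (Nat.not_even_iff_odd.mpr hj),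
        Fin.mk.injEq] at h
      obtain ⟨s, hs⟩ := hi; obtain ⟨t, ht⟩ := hj
      exact Fin.ext (by omega)
  have hπbij : Function.Bijective π := Finite.injective_iff_bijective.mp hπinj
  have hprodeq : ∏ i : Fin m, (X - C (ν (π i))) = ∏ i : Fin m, (X - C (ν i)) :=
    Fintype.prod_bijective π hπbij _ _ (fun i => rfl)
  have hadj : ∀ i j : Fin m, i.val + 1 = j.val →
      (-1:ℝ) ^ (j : ℕ) * ν (π j) < (-1:ℝ) ^ (i : ℕ) * ν (π i) := by
    intro i j hij
    have hiv := i.isLt; have hjv := j.isLt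
    rcases Nat.even_or_odd i.val with hi | hi
    · have hj : Odd j.val := by rw [← hij]; exact Even.add_one hi
      rw [hi.neg_one_pow, hj.neg_one_pow, one_mul]
      rw [hπdef]
      simp only
      rw [if_pos hi, if_neg (Nat.not_even_iff_odd.mpr hj)]
      obtain ⟨s, hs⟩ := hi
      have pA : i.val / 2 < m := by omega
      have hA := hAcons (i.val / 2) pA (hidx1 i)
      have e1 : ν ⟨(j.val - 1) / 2, hidx2 j⟩ = ν ⟨i.val / 2, pA⟩ :=
        fin_fun_congr ν _ _ (by omega)
      rw [e1]
      linarith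
    · have hj : Even j.val := by
        rcases Nat.even_or_odd j.val with h | h
        · exact h
        · exfalso
          obtain ⟨s, hs⟩ := hi; obtain ⟨t, ht⟩ := h
          omega
      rw [hi.neg_one_pow, hj.neg_one_pow, one_mul]
      rw [hπdef]
      simp only
      rw [if_neg (Nat.not_even_iff_odd.mpr hi), if_pos hj]
      obtain ⟨s, hs⟩ := hi
      have pA : s < m := by omega
      have pB : m - 2 - s < m := by omega
      have hB := hBcons s pA (by omega) pB
      have e1 : ν ⟨m - 1 - j.val / 2, hidx1 j⟩ = ν ⟨m - 2 - s, pB⟩ :=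
        fin_fun_congr ν _ _ (by omega)
      have e2 : ν ⟨(i.val - 1) / 2, hidx2 i⟩ = ν ⟨s, pA⟩ :=
        fin_fun_congr ν _ _ (by omega)
      rw [e1, e2]
      linarith
  have hstrict : StrictAnti (fun i : Fin m => (-1:ℝ) ^ (i : ℕ) * ν (π i)) :=
    fin_strictAnti _ hadj
  have hlast : 0 < (-1:ℝ) ^ ((⟨m - 1, by omega⟩ : Fin m) : ℕ) * ν (π ⟨m - 1, by omega⟩) := by
    have hval : ((⟨m - 1, by omega⟩ : Fin m) : ℕ) = m - 1 := rfl
    rw [hval, hπdef]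
    simp only
    rcases Nat.even_or_odd (m - 1) with he | ho
    · rw [he.neg_one_pow, one_mul, if_pos he]
      obtain ⟨s, hs⟩ := he
      have pA : s < m := by omega
      have pB : m - 1 - s < m := by omega
      have hA := hAcons s pA pB
      have e1 : ν ⟨m - 1 - (m - 1) / 2, by omega⟩ = ν ⟨m - 1 - s, pB⟩ :=
        fin_fun_congr ν _ _ (by omega)
      rw [e1]
      have hmono2 : ν ⟨s, pA⟩ ≤ ν ⟨m - 1 - s, pB⟩ :=
        hνmono.monotone (Fin.mk_le_mk.mpr (by omega))
      linarith
    · rw [ho.neg_one_pow, if_neg (Nat.not_even_iff_odd.mpr ho)]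
      obtain ⟨s, hs⟩ := ho
      have pA : s < m := by omega
      have pB : m - 2 - s < m := by omega
      have hB := hBcons s pA (by omega) pB
      have e1 : ν ⟨(m - 1 - 1) / 2, by omega⟩ = ν ⟨s, pA⟩ :=
        fin_fun_congr ν _ _ (by omega)
      have e2 : ν ⟨m - 2 - s, pB⟩ = ν ⟨s, pA⟩ :=
        fin_fun_congr ν _ _ (by omega)
      rw [e1]
      rw [e2] at hB
      linarith
  have hallpos : ∀ i : Fin m, 0 < (-1:ℝ) ^ (i : ℕ) * ν (π i) := by
    intro i
    have hle : i ≤ (⟨m - 1, by omega⟩ : Fin m) := by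
      rw [Fin.le_def]
      exact (show i.val ≤ m - 1 by have := i.isLt; omega)
    have h5 := hstrict.antitone hle
    simp only at h5
    linarith [hlast]
  -- wrap up
  refine ⟨hdeg', ?_⟩
  refine ⟨fun i => ν (π (Fin.cast hdeg' i)), ?_, ?_, ?_⟩
  · have hgoal2 : ∏ i : Fin q'.natDegree, (X - C (ν (π (Fin.cast hdeg' i))))
        = ∏ i : Fin m, (X - C (ν i)) := by
      rw [← hprodeq]
      exact Equiv.prod_comp (finCongr hdeg') (fun i => X - C (ν (π i)))
    rw [hgoal2]
    exact hfac'
  · intro i j hij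
    exact hstrict (show Fin.cast hdeg' i < Fin.cast hdeg' j from hij)
  · exact fun i => hallpos (Fin.cast hdeg' i)


/-- If `p` of degree `n ≥ 2` is self-interlacing of kind I, then so is every derivative
`p^{(k)}`, `k = 1, …, n - 1`. -/
theorem selfInterlacing_derivative
    (n : ℕ) (hn : 2 ≤ n) (p : Polynomial ℝ) (hdeg : p.natDegree = n)
    (hsi : SelfInterlacingI p) :
    ∀ k, 1 ≤ k → k ≤ n - 1 → SelfInterlacingI (Polynomial.derivative^[k] p) := by
  subst hdeg
  intro k hk1 hkn
  have aux : ∀ j : ℕ, j ≤ p.natDegree - 1 →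
      (Polynomial.derivative^[j] p).natDegree = p.natDegree - j ∧
      (1 ≤ j → SelfInterlacingI (Polynomial.derivative^[j] p)) := by
    intro j
    induction j with
    | zero => intro _; exact ⟨by simp, by omega⟩
    | succ j ih =>
      intro hj
      have ihj := ih (by omega)
      have hdegj : (Polynomial.derivative^[j] p).natDegree = p.natDegree - j := ihj.1
      have hsij : SelfInterlacingI (Polynomial.derivative^[j] p) := by
        rcases Nat.eq_zero_or_pos j with rfl | hjpos
        · simpa using hsi
        · exact ihj.2 hjpos
      have hm : 1 ≤ p.natDegree - j - 1 := by omega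
      have hstep := oneStep (p.natDegree - j - 1) hm (Polynomial.derivative^[j] p)
        (by omega) hsij
      rw [Function.iterate_succ_apply']
      refine ⟨?_, fun _ => hstep.2⟩
      rw [hstep.1]
      omega
  exact (aux k (by omega)).2 hk1
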